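/- (Proposition 2, dual optimality) Suppose π* satisfies 0 < π* ≤ min(λ, p̄) and Q(π*) = ∑ᵢ yᵢ*(π*) = D, and set xᵢ* = yᵢ*(π*) for each supplier i and x₀* = 0. Then π* is a Lagrange multiplier for the demand constraint: for all x₀ ≥ 0 and xᵢ ≥ 0 (i = 1, …, I), ∑ᵢ λ·E[(xᵢ − Xᵢ)⁺] + p̄·x₀ − π*·(∑ᵢ xᵢ + x₀ − D) ≥ ∑ᵢ λ·E[(xᵢ* − Xᵢ)⁺]; that is, x* minimizes the Lagrangian of the dispatch problem with multiplier π* over the nonnegative orthant. -/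

import Mathlib

open MeasureTheory Set

/-- The cumulative distribution function `F(t) = P(X ≤ t)` of a random variable `X`. -/
noncomputable def cdfOf {Ω : Type*} [MeasurableSpace Ω] (μ : Measure Ω) (X : Ω → ℝ) (t : ℝ) : ℝ :=
  (μ {ω | X ω ≤ t}).toReal

/-- The generalized inverse `F⁻¹(u) = inf {t ≥ 0 : F(t) ≥ u}`. -/
noncomputable def geninv (F : ℝ → ℝ) (u : ℝ) : ℝ :=
  sInf {t : ℝ | 0 ≤ t ∧ u ≤ F t}

/-- The optimal commitment function `y*(π) = F⁻¹(min(π/λ, 1))`. -/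
noncomputable def ystar (F : ℝ → ℝ) (lam : ℝ) (pr : ℝ) : ℝ :=
  geninv F (min (pr / lam) 1)

/-- The expected profit `R(x; π) = x·π − λ·E[(x − X)⁺]` of a supplier paid day-ahead
price `π` for committed quantity `x`, with real-time penalty price `λ`. -/
noncomputable def profit {Ω : Type*} [MeasurableSpace Ω] (μ : Measure Ω) (X : Ω → ℝ)
    (lam : ℝ) (pr : ℝ) (x : ℝ) : ℝ :=
  x * pr - lam * ∫ ω, max (x - X ω) 0 ∂μ

lemma geninv_cdf_eq (F : ℝ → ℝ) (hc : Continuous F) (h0 : F 0 = 0)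
    (u : ℝ) (hu : 0 < u) (b : ℝ) (hb : 0 ≤ b) (hub : u ≤ F b) :
    0 ≤ geninv F u ∧ F (geninv F u) = u := by
  set S : Set ℝ := {t : ℝ | 0 ≤ t ∧ u ≤ F t} with hS
  have hSne : S.Nonempty := ⟨b, hb, hub⟩
  have hbdd : BddBelow S := ⟨0, fun t ht => ht.1⟩
  have hclosed : IsClosed S := by
    have : S = Ici 0 ∩ F ⁻¹' Ici u := by
      ext t
      simp only [hS, Set.mem_setOf_eq, Set.mem_inter_iff, Set.mem_Ici, Set.mem_preimage]
    rw [this]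
    exact isClosed_Ici.inter (isClosed_Ici.preimage hc)
  have hmem : geninv F u ∈ S := hclosed.csInf_mem hSne hbdd
  obtain ⟨hm0, hmu⟩ := hmem
  refine ⟨hm0, le_antisymm ?_ hmu⟩
  have hIVT := intermediate_value_Icc hm0 hc.continuousOn
  have humem : u ∈ Icc (F 0) (F (geninv F u)) := ⟨by rw [h0]; exact hu.le, hmu⟩
  obtain ⟨t, ht, htu⟩ := hIVT humem
  have htS : t ∈ S := ⟨ht.1, htu.ge⟩
  have h1 : geninv F u ≤ t := csInf_le hbdd htS
  have h2 : t = geninv F u := le_antisymm ht.2 h1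
  rw [← h2, htu]

lemma integrable_pos_part {Ω : Type*} [MeasurableSpace Ω] (μ : Measure Ω) [IsProbabilityMeasure μ]
    (X : Ω → ℝ) (hX : Measurable X) (hXnn : ∀ ω, 0 ≤ X ω) (a : ℝ) :
    Integrable (fun ω => max (a - X ω) 0) μ := by
  refine ⟨(((measurable_const.sub hX).max measurable_const)).aestronglyMeasurable, ?_⟩
  apply HasFiniteIntegral.of_bounded (C := |a|)
  filter_upwards [] with ω
  rw [Real.norm_eq_abs, abs_le]
  constructor
  · linarith [le_max_right (a - X ω) (0:ℝ), abs_nonneg a]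
  · calc max (a - X ω) 0 ≤ max a 0 := max_le_max (by linarith [hXnn ω]) le_rfl
      _ ≤ |a| := max_le (le_abs_self a) (abs_nonneg a)

lemma key_ineq {Ω : Type*} [MeasurableSpace Ω] (μ : Measure Ω) [IsProbabilityMeasure μ]
    (X : Ω → ℝ) (hX : Measurable X) (hXnn : ∀ ω, 0 ≤ X ω) (a x : ℝ) :
    (∫ ω, max (a - X ω) 0 ∂μ) + (x - a) * cdfOf μ X a ≤ ∫ ω, max (x - X ω) 0 ∂μ := by
  set s : Set Ω := {ω | X ω ≤ a} with hs
  have hsm : MeasurableSet s := hX measurableSet_Iic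
  have hint1 := integrable_pos_part μ X hX hXnn a
  have hint2 : Integrable (s.indicator (fun _ => x - a)) μ :=
    (integrable_const (x - a)).indicator hsm
  have hptwise : ∀ ω, max (a - X ω) 0 + s.indicator (fun _ => x - a) ω ≤ max (x - X ω) 0 := by
    intro ω
    rcases le_or_gt (X ω) a with h | h
    · have : s.indicator (fun _ => x - a) ω = x - a := Set.indicator_of_mem h _
      rw [this, max_eq_left (by linarith)]
      have : x - X ω ≤ max (x - X ω) 0 := le_max_left _ _
      linarith
    · have : s.indicator (fun _ => x - a) ω = 0 := Set.indicator_of_notMem (by simpa [hs] using h) _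
      rw [this, add_zero, max_eq_right (by linarith)]
      exact le_max_right _ _
  have hmono : ∫ ω, (max (a - X ω) 0 + s.indicator (fun _ => x - a) ω) ∂μ
      ≤ ∫ ω, max (x - X ω) 0 ∂μ :=
    integral_mono (hint1.add hint2) (integrable_pos_part μ X hX hXnn x) hptwise
  rw [integral_add hint1 hint2, integral_indicator_const _ hsm] at hmono
  simpa [cdfOf, smul_eq_mul, mul_comm, Measure.real] using hmono

/-- Proposition 2 (dual optimality): if `0 < π* ≤ min(λ, p̄)` and `∑ᵢ yᵢ*(π*) = D`, setting
`xᵢ* = yᵢ*(π*)` and `x₀* = 0`, the price `π*` is a Lagrange multiplier for the demand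
constraint: for all `x₀ ≥ 0` and `xᵢ ≥ 0`,
`∑ᵢ λ·E[(xᵢ − Xᵢ)⁺] + p̄·x₀ − π*·(∑ᵢ xᵢ + x₀ − D) ≥ ∑ᵢ λ·E[(xᵢ* − Xᵢ)⁺]`. -/
theorem rup_dual_optimality
    {Ω : Type*} [MeasurableSpace Ω] (μ : Measure Ω) [IsProbabilityMeasure μ]
    (I : ℕ) (hI : 2 ≤ I)
    (X : Fin I → Ω → ℝ) (hX : ∀ i, Measurable (X i)) (hXnn : ∀ i ω, 0 ≤ X i ω)
    (Xbar : Fin I → ℝ) (hXbar : ∀ i, 0 < Xbar i)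
    (hsupp : ∀ i, μ {ω | X i ω ≤ Xbar i} = 1)
    (hFc : ∀ i, Continuous (cdfOf μ (X i)))
    (hF0 : ∀ i, cdfOf μ (X i) 0 = 0) (hF1 : ∀ i, cdfOf μ (X i) (Xbar i) = 1)
    (lam : ℝ) (hlam : 0 < lam) (pbar : ℝ) (hpbar : 0 < pbar)
    (D : ℝ) (hD : 0 < D)
    (pistar : ℝ) (hpi0 : 0 < pistar) (hpile : pistar ≤ min lam pbar)
    (hclear : (∑ i, ystar (cdfOf μ (X i)) lam pistar) = D) :
    ∀ (x0 : ℝ) (x : Fin I → ℝ), 0 ≤ x0 → (∀ i, 0 ≤ x i) →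
      (∑ i, lam * ∫ ω, max (ystar (cdfOf μ (X i)) lam pistar - X i ω) 0 ∂μ)
        ≤ (∑ i, lam * ∫ ω, max (x i - X i ω) 0 ∂μ) + pbar * x0
            - pistar * ((∑ i, x i) + x0 - D) := by

  intro x0 x hx0 hx
  set u : ℝ := pistar / lam with hu
  have hu0 : 0 < u := div_pos hpi0 hlam
  have hu1 : u ≤ 1 := div_le_one_of_le₀ (le_trans hpile (min_le_left _ _)) hlam.le
  have hmin : min u 1 = u := min_eq_left hu1
  -- per-supplier inequality
  have hper : ∀ i : Fin I,
      lam * (∫ ω, max (ystar (cdfOf μ (X i)) lam pistar - X i ω) 0 ∂μ)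
        + pistar * (x i - ystar (cdfOf μ (X i)) lam pistar)
        ≤ lam * ∫ ω, max (x i - X i ω) 0 ∂μ := by
    intro i
    have hy : ystar (cdfOf μ (X i)) lam pistar = geninv (cdfOf μ (X i)) u := by
      rw [ystar, hmin]
    obtain ⟨hy0, hyF⟩ := geninv_cdf_eq (cdfOf μ (X i)) (hFc i) (hF0 i) u hu0
      (Xbar i) (hXbar i).le (by rw [hF1 i]; exact hu1)
    have hk := key_ineq μ (X i) (hX i) (hXnn i)
      (ystar (cdfOf μ (X i)) lam pistar) (x i)
    rw [hy, hyF] at hk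
    have hlamu : lam * u = pistar := by
      rw [hu]; field_simp
    rw [← hy] at hk
    calc lam * (∫ ω, max (ystar (cdfOf μ (X i)) lam pistar - X i ω) 0 ∂μ)
          + pistar * (x i - ystar (cdfOf μ (X i)) lam pistar)
        = lam * ((∫ ω, max (ystar (cdfOf μ (X i)) lam pistar - X i ω) 0 ∂μ)
            + (x i - ystar (cdfOf μ (X i)) lam pistar) * u) := by rw [← hlamu]; ring
      _ ≤ lam * ∫ ω, max (x i - X i ω) 0 ∂μ := mul_le_mul_of_nonneg_left hk hlam.le
  have h1 := Finset.sum_le_sum (s := Finset.univ) (fun i _ => hper i)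
  rw [Finset.sum_add_distrib] at h1
  have h2 : (∑ i, pistar * (x i - ystar (cdfOf μ (X i)) lam pistar))
      = pistar * ((∑ i, x i) - D) := by
    rw [← Finset.mul_sum, Finset.sum_sub_distrib, hclear]
  rw [h2] at h1
  have hpb : pistar * x0 ≤ pbar * x0 :=
    mul_le_mul_of_nonneg_right (le_trans hpile (min_le_right _ _)) hx0
  linarith [h1, hpb]
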